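/- Let R₁ and R₂ be commutative rings with identity, and let P₁, I₁ be ideals of R₁ and P₂, I₂ ideals of R₂ such that P₁ × P₂ is an (I₁ × I₂)-prime ideal of R₁ × R₂. Then: (a) if P₁ is a proper ideal of R₁, then P₁ is an I₁-prime ideal of R₁ (and symmetrically for P₂); (b) if moreover P₁ ≠ I₁·P₁, then P₁ = R₁ or P₂ = R₂. -/

import Mathlib

/-- A proper ideal `P` of a commutative ring `R` is `I`-prime if whenever
`a * b ∈ P \ I*P`, then `a ∈ P` or `b ∈ P`. -/
def IsIPrime {R : Type*} [CommRing R] (I P : Ideal R) : Prop :=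
  P ≠ ⊤ ∧ ∀ a b : R, a * b ∈ P → a * b ∉ I * P → a ∈ P ∨ b ∈ P

/-- A proper ideal `Q` is weakly prime if whenever `a * b ∈ Q \ {0}`,
then `a ∈ Q` or `b ∈ Q`. -/
def IsWeaklyPrime {R : Type*} [CommRing R] (Q : Ideal R) : Prop :=
  Q ≠ ⊤ ∧ ∀ a b : R, a * b ∈ Q → a * b ≠ 0 → a ∈ Q ∨ b ∈ Q

lemma prod_mul_le {R₁ R₂ : Type*} [CommRing R₁] [CommRing R₂]
    (I₁ P₁ : Ideal R₁) (I₂ P₂ : Ideal R₂) :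
    (Ideal.prod I₁ I₂) * (Ideal.prod P₁ P₂) ≤ Ideal.prod (I₁ * P₁) (I₂ * P₂) := by
  rw [Ideal.mul_le]
  intro r hr s hs
  rw [Ideal.mem_prod] at hr hs ⊢
  exact ⟨Ideal.mul_mem_mul hr.1 hs.1, Ideal.mul_mem_mul hr.2 hs.2⟩

theorem stmt_14 {R₁ R₂ : Type*} [CommRing R₁] [CommRing R₂]
    (I₁ P₁ : Ideal R₁) (I₂ P₂ : Ideal R₂)
    (h : IsIPrime (Ideal.prod I₁ I₂) (Ideal.prod P₁ P₂)) :
    (P₁ ≠ ⊤ → IsIPrime I₁ P₁) ∧ (P₂ ≠ ⊤ → IsIPrime I₂ P₂) ∧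
      (P₁ ≠ I₁ * P₁ → P₁ = ⊤ ∨ P₂ = ⊤) := by
  obtain ⟨hne, hP⟩ := h
  have hle := prod_mul_le I₁ P₁ I₂ P₂
  refine ⟨?_, ?_, ?_⟩
  · intro h1
    refine ⟨h1, fun a b hab hnab => ?_⟩
    have hmem : ((a, 0) : R₁ × R₂) * (b, 0) ∈ Ideal.prod P₁ P₂ := by
      rw [Ideal.mem_prod]; exact ⟨hab, by simp⟩
    have hnmem : ((a, 0) : R₁ × R₂) * (b, 0) ∉ Ideal.prod I₁ I₂ * Ideal.prod P₁ P₂ := by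
      intro hmem'
      exact hnab ((Ideal.mem_prod _ _).mp (hle hmem')).1
    rcases hP _ _ hmem hnmem with hc | hc
    · exact Or.inl ((Ideal.mem_prod _ _).mp hc).1
    · exact Or.inr ((Ideal.mem_prod _ _).mp hc).1
  · intro h2
    refine ⟨h2, fun a b hab hnab => ?_⟩
    have hmem : ((0, a) : R₁ × R₂) * (0, b) ∈ Ideal.prod P₁ P₂ := by
      rw [Ideal.mem_prod]; exact ⟨by simp, hab⟩
    have hnmem : ((0, a) : R₁ × R₂) * (0, b) ∉ Ideal.prod I₁ I₂ * Ideal.prod P₁ P₂ := by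
      intro hmem'
      exact hnab ((Ideal.mem_prod _ _).mp (hle hmem')).2
    rcases hP _ _ hmem hnmem with hc | hc
    · exact Or.inl ((Ideal.mem_prod _ _).mp hc).2
    · exact Or.inr ((Ideal.mem_prod _ _).mp hc).2
  · intro hne'
    have hsub : I₁ * P₁ ≤ P₁ := Ideal.mul_le_right
    obtain ⟨p, hpP, hpnI⟩ : ∃ p, p ∈ P₁ ∧ p ∉ I₁ * P₁ := by
      by_contra hc
      push_neg at hc
      exact hne' (le_antisymm (fun x hx => hc x hx) hsub)
    have hmem : ((1, 0) : R₁ × R₂) * (p, 1) ∈ Ideal.prod P₁ P₂ := by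
      rw [Ideal.mem_prod]; simpa using hpP
    have hnmem : ((1, 0) : R₁ × R₂) * (p, 1) ∉ Ideal.prod I₁ I₂ * Ideal.prod P₁ P₂ := by
      intro hmem'
      have := ((Ideal.mem_prod _ _).mp (hle hmem')).1
      simp only [Prod.mk_mul_mk, one_mul] at this
      exact hpnI this
    rcases hP _ _ hmem hnmem with hc | hc
    · exact Or.inl (Ideal.eq_top_of_isUnit_mem _ ((Ideal.mem_prod _ _).mp hc).1 isUnit_one)
    · exact Or.inr (Ideal.eq_top_of_isUnit_mem _ ((Ideal.mem_prod _ _).mp hc).2 isUnit_one)
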